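/- Let {(x_i, a_i¹, a_i⁰, y_i)}_{i=1}^N be any fixed finite dataset with y_i ∈ {0,1}, and for r : X×A → ℝ define L(r) = −(1/N)·Σ_{i=1}^N [ y_i·log σ(r(x_i,a_i¹) − r(x_i,a_i⁰)) + (1−y_i)·log σ(r(x_i,a_i⁰) − r(x_i,a_i¹)) ]. Let R̄ ≥ 0 and ε ≥ 0. If r† : X×A → [0, R̄] and r : X×A → ℝ satisfy sup_{(x,a)} |r†(x,a) − r(x,a)| ≤ ε, then L(r†) − L(r) ≤ 4·ε·(1 + e^{R̄}). -/

import Mathlib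

open Real

/-- The sigmoid function `σ(z) = 1/(1+e^{−z})`. -/
noncomputable def sigmoid (z : ℝ) : ℝ := 1 / (1 + Real.exp (-z))

/-- The cross-entropy (negative log-likelihood) loss of the Bradley–Terry preference model
on a dataset of `N` tuples `(x_i, a_i¹, a_i⁰, y_i)`. -/
noncomputable def BTLoss {X A : Type*} (N : ℕ) (data : Fin N → (X × A × A) × Bool)
    (r : X → A → ℝ) : ℝ :=
  -(1 / (N : ℝ)) * ∑ i : Fin N,
    (if (data i).2 then
      Real.log (_root_.sigmoid (r (data i).1.1 (data i).1.2.1 - r (data i).1.1 (data i).1.2.2))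
    else
      Real.log (_root_.sigmoid (r (data i).1.1 (data i).1.2.2 - r (data i).1.1 (data i).1.2.1)))

lemma log_sigmoid_eq (z : ℝ) : Real.log (_root_.sigmoid z) = -Real.log (1 + Real.exp (-z)) := by
  have h : (0:ℝ) < 1 + Real.exp (-z) := by positivity
  simp [_root_.sigmoid, Real.log_div, h.ne']

lemma log_sigmoid_lipschitz (a b : ℝ) :
    Real.log (_root_.sigmoid a) - Real.log (_root_.sigmoid b) ≤ |a - b| := by
  rw [log_sigmoid_eq, log_sigmoid_eq]
  have hb : (0:ℝ) < 1 + Real.exp (-b) := by positivity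
  have ha : (0:ℝ) < 1 + Real.exp (-a) := by positivity
  rcases le_total b a with h | h
  · -- a ≥ b : log(1+e^{-b}) - log(1+e^{-a}) ≤ a - b
    have key : 1 + Real.exp (-b) ≤ Real.exp (a - b) * (1 + Real.exp (-a)) := by
      have h1 : (1:ℝ) ≤ Real.exp (a - b) := by
        rw [Real.one_le_exp_iff]; linarith
      have h2 : Real.exp (a - b) * Real.exp (-a) = Real.exp (-b) := by
        rw [← Real.exp_add]; ring_nf
      nlinarith [Real.exp_pos (-a)]
    have := Real.log_le_log hb key
    rw [Real.log_mul (Real.exp_pos _).ne' ha.ne', Real.log_exp] at this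
    have habs : a - b ≤ |a - b| := le_abs_self _
    linarith
  · -- a ≤ b : difference ≤ 0
    have : Real.exp (-b) ≤ Real.exp (-a) := Real.exp_le_exp.mpr (by linarith)
    have := Real.log_le_log hb (by linarith : 1 + Real.exp (-b) ≤ 1 + Real.exp (-a))
    have : |a - b| ≥ 0 := abs_nonneg _
    linarith

/-- Sup-norm stability of the Bradley–Terry loss: if `r†` takes values in `[0, R̄]` and
`‖r† − r‖_∞ ≤ ε`, then `L(r†) − L(r) ≤ 4·ε·(1 + e^{R̄})`. -/
theorem BTLoss_sup_norm_stability
    {X A : Type*} [MeasurableSpace X] [MeasurableSpace A]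
    (N : ℕ) (hN : 0 < N) (data : Fin N → (X × A × A) × Bool)
    (R : ℝ) (hR : 0 ≤ R) (ε : ℝ) (hε : 0 ≤ ε)
    (rdag r : X → A → ℝ)
    (hrdag : ∀ x a, rdag x a ∈ Set.Icc 0 R)
    (hclose : ∀ x a, |rdag x a - r x a| ≤ ε) :
    BTLoss N data rdag - BTLoss N data r ≤ 4 * ε * (1 + Real.exp R) := by
  have hNpos : (0:ℝ) < N := Nat.cast_pos.mpr hN
  have key : BTLoss N data rdag - BTLoss N data r ≤ 2 * ε := by
    have heq : BTLoss N data rdag - BTLoss N data r = (1 / (N:ℝ)) * ∑ i : Fin N,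
        ((if (data i).2 then
          Real.log (_root_.sigmoid (r (data i).1.1 (data i).1.2.1 - r (data i).1.1 (data i).1.2.2))
        else
          Real.log (_root_.sigmoid (r (data i).1.1 (data i).1.2.2 - r (data i).1.1 (data i).1.2.1))) -
        (if (data i).2 then
          Real.log (_root_.sigmoid (rdag (data i).1.1 (data i).1.2.1 - rdag (data i).1.1 (data i).1.2.2))
        else
          Real.log (_root_.sigmoid (rdag (data i).1.1 (data i).1.2.2 - rdag (data i).1.1 (data i).1.2.1)))) := by
      unfold BTLoss
      rw [Finset.sum_sub_distrib]
      ring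
    rw [heq]
    have hbound : ∀ i : Fin N,
        ((if (data i).2 then
          Real.log (_root_.sigmoid (r (data i).1.1 (data i).1.2.1 - r (data i).1.1 (data i).1.2.2))
        else
          Real.log (_root_.sigmoid (r (data i).1.1 (data i).1.2.2 - r (data i).1.1 (data i).1.2.1))) -
        (if (data i).2 then
          Real.log (_root_.sigmoid (rdag (data i).1.1 (data i).1.2.1 - rdag (data i).1.1 (data i).1.2.2))
        else
          Real.log (_root_.sigmoid (rdag (data i).1.1 (data i).1.2.2 - rdag (data i).1.1 (data i).1.2.1)))) ≤ 2 * ε := by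
      intro i
      obtain ⟨x, a1, a0⟩ := (data i).1
      have h1 := hclose x a1
      have h0 := hclose x a0
      by_cases hb : (data i).2 <;> simp only [hb, if_true, if_false]
      · refine le_trans (log_sigmoid_lipschitz _ _) ?_
        calc |r x a1 - r x a0 - (rdag x a1 - rdag x a0)|
            ≤ |r x a1 - rdag x a1| + |r x a0 - rdag x a0| := by
              rw [show r x a1 - r x a0 - (rdag x a1 - rdag x a0)
                = (r x a1 - rdag x a1) - (r x a0 - rdag x a0) by ring]
              exact abs_sub _ _
          _ ≤ 2 * ε := by
              rw [abs_sub_comm (r x a1), abs_sub_comm (r x a0)]; linarith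
      · refine le_trans (log_sigmoid_lipschitz _ _) ?_
        calc |r x a0 - r x a1 - (rdag x a0 - rdag x a1)|
            ≤ |r x a0 - rdag x a0| + |r x a1 - rdag x a1| := by
              rw [show r x a0 - r x a1 - (rdag x a0 - rdag x a1)
                = (r x a0 - rdag x a0) - (r x a1 - rdag x a1) by ring]
              exact abs_sub _ _
          _ ≤ 2 * ε := by
              rw [abs_sub_comm (r x a1), abs_sub_comm (r x a0)]; linarith
    have hsum : (∑ i : Fin N, _) ≤ ∑ i : Fin N, (2*ε) := Finset.sum_le_sum (fun i _ => hbound i)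
    calc (1 / (N:ℝ)) * _ ≤ (1 / (N:ℝ)) * (∑ i : Fin N, (2*ε)) := by
          apply mul_le_mul_of_nonneg_left hsum (by positivity)
      _ = 2 * ε := by
          rw [Finset.sum_const, Finset.card_univ, Fintype.card_fin, nsmul_eq_mul]
          field_simp
  have hexp : (0:ℝ) < Real.exp R := Real.exp_pos R
  nlinarith
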